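/- A function f : ℝmax^n → ℝ̄ is max-plus convex and lower semi-continuous if and only if f is the pointwise supremum of some (possibly empty) family of residuated differences of max-plus affine functions, i.e., if and only if there is a family of quadruples (w'_ℓ, d'_ℓ, w''_ℓ, d''_ℓ) with w'_ℓ, w''_ℓ ∈ ℝmax^n and d'_ℓ, d''_ℓ ∈ ℝmax such that f(x) = sup over ℓ of (max(⟨w'_ℓ, x⟩, d'_ℓ) ⊖ max(⟨w''_ℓ, x⟩, d''_ℓ)) for all x ∈ ℝmax^n. -/

import Mathlib

noncomputable section

/-- `ℝmax = ℝ ∪ {-∞}`, the max-plus semifield. -/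
abbrev Rmax := WithBot ℝ

/-- the order topology on `ℝmax`. -/
noncomputable instance : TopologicalSpace Rmax := Preorder.topology Rmax
instance : OrderTopology Rmax := ⟨rfl⟩

/-- the embedding of `ℝmax = ℝ ∪ {-∞}` into `ℝ̄ = [-∞,+∞]`. -/
def Rmax.toE : Rmax → EReal := WithBot.recBotCoe ⊥ (fun r : ℝ => (r : EReal))

/-- max-plus scalar product `⟨w,x⟩ = max_i (w_i + x_i)` on `ℝmax^n`. -/
def mdot {n : ℕ} (w x : Fin n → Rmax) : Rmax := Finset.univ.sup fun i => w i + x i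

/-- residuated difference: `a ⊖ b = a` if `a > b`, and `-∞` otherwise. -/
def rdiff (a b : Rmax) : Rmax := if b < a then a else ⊥

/-- max-plus convexity of a subset of `ℝmax^n`. -/
def MPConvex {n : ℕ} (C : Set (Fin n → Rmax)) : Prop :=
  ∀ x ∈ C, ∀ y ∈ C, ∀ α β : Rmax, max α β = 0 →
    (fun i => max (α + x i) (β + y i)) ∈ C

/-- max-plus convexity of a subset of `ℝmax^n × ℝmax ≅ ℝmax^{n+1}`. -/
def MPConvexP {n : ℕ} (C : Set ((Fin n → Rmax) × Rmax)) : Prop :=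
  ∀ p ∈ C, ∀ q ∈ C, ∀ α β : Rmax, max α β = 0 →
    ((fun i => max (α + p.1 i) (β + q.1 i)), max (α + p.2) (β + q.2)) ∈ C

/-- the epigraph of a function `f : ℝmax^n → ℝ̄`. -/
def Epi {n : ℕ} (f : (Fin n → Rmax) → EReal) : Set ((Fin n → Rmax) × Rmax) :=
  {p | f p.1 ≤ Rmax.toE p.2}

/-- a function `f : ℝmax^n → ℝ̄` is max-plus convex if its epigraph is
max-plus convex. -/
def MPConvexFun {n : ℕ} (f : (Fin n → Rmax) → EReal) : Prop :=
  MPConvexP (Epi f)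

/-- a function `f : ℝmax^n → ℝ̄` is lower semi-continuous if all its lower
level sets are closed. -/
def LSC {n : ℕ} (f : (Fin n → Rmax) → EReal) : Prop :=
  ∀ t : EReal, IsClosed {x | f x ≤ t}


-- ======================= auxiliary development =======================

open Classical in
noncomputable instance : ConditionallyCompleteLinearOrder Rmax :=
  { WithBot.conditionallyCompleteLattice, WithBot.linearOrder with
    csSup_of_not_bddAbove := by
      intro s hs
      have h1 : sSup s = ⊥ := by
        show (if s ⊆ {⊥} ∨ ¬BddAbove s then (⊥:Rmax) else _) = ⊥
        rw [if_pos (Or.inr hs)]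
      rw [h1, WithBot.sSup_empty]
    csInf_of_not_bddBelow := fun s hs => absurd (OrderBot.bddBelow s) hs }

namespace MP
-- basic arithmetic
lemma add_le_add_left_iff {r : ℝ} {a b : Rmax} : (r:Rmax) + a ≤ (r:Rmax) + b ↔ a ≤ b :=
  WithBot.add_le_add_iff_left (by simp)
lemma add_lt_add_left_iff {r : ℝ} {a b : Rmax} : (r:Rmax) + a < (r:Rmax) + b ↔ a < b := by
  rw [lt_iff_not_ge, lt_iff_not_ge, add_le_add_left_iff]
lemma lt_of_add_lt_add_left {c a b : Rmax} (h : c + a < c + b) : a < b := by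
  induction c using WithBot.recBotCoe with
  | bot => simp at h
  | coe r => exact add_lt_add_left_iff.1 h
lemma add_max (a b c : Rmax) : a + max b c = max (a + b) (a + c) := by
  rcases le_total b c with h | h
  · rw [max_eq_right h, max_eq_right (add_le_add_right h a)]
  · rw [max_eq_left h, max_eq_left (add_le_add_right h a)]
lemma max_add (a b c : Rmax) : max a b + c = max (a + c) (b + c) := by
  rw [add_comm, add_max, add_comm c a, add_comm c b]
-- toE
lemma toE_bot : Rmax.toE ⊥ = ⊥ := rfl
lemma toE_coe (r : ℝ) : Rmax.toE (r:Rmax) = (r : EReal) := rfl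
lemma toE_le_toE_iff {a b : Rmax} : Rmax.toE a ≤ Rmax.toE b ↔ a ≤ b := by
  induction a using WithBot.recBotCoe <;> induction b using WithBot.recBotCoe <;>
    simp [Rmax.toE, EReal.coe_le_coe_iff]
lemma toE_lt_toE_iff {a b : Rmax} : Rmax.toE a < Rmax.toE b ↔ a < b := by
  rw [lt_iff_not_ge, lt_iff_not_ge, toE_le_toE_iff]
lemma toE_mono {a b : Rmax} (h : a ≤ b) : Rmax.toE a ≤ Rmax.toE b := toE_le_toE_iff.2 h
lemma toE_lt_top (a : Rmax) : Rmax.toE a < ⊤ := by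
  induction a using WithBot.recBotCoe <;> simp [Rmax.toE]
lemma exists_toE_eq {x : EReal} (h : x < ⊤) : ∃ s : Rmax, Rmax.toE s = x := by
  induction x with
  | bot => exact ⟨⊥, rfl⟩
  | coe r => exact ⟨(r:Rmax), rfl⟩
  | top => exact absurd h (lt_irrefl _)
-- mdot
lemma mdot_le_iff {n : ℕ} {w x : Fin n → Rmax} {b : Rmax} :
    mdot w x ≤ b ↔ ∀ i, w i + x i ≤ b := Finset.sup_le_iff.trans (by simp)
lemma le_mdot {n : ℕ} (w x : Fin n → Rmax) (i : Fin n) : w i + x i ≤ mdot w x :=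
  Finset.le_sup (f := fun i => w i + x i) (Finset.mem_univ i)
lemma mdot_bot {n : ℕ} (x : Fin n → Rmax) : mdot (fun _ => ⊥) x = ⊥ := by
  simp [mdot]
lemma finsetSup_max {ι : Type*} (s : Finset ι) (f g : ι → Rmax) :
    (s.sup fun i => max (f i) (g i)) = max (s.sup f) (s.sup g) := by
  apply le_antisymm
  · exact Finset.sup_le fun i hi => max_le_max (Finset.le_sup hi) (Finset.le_sup hi)
  · exact max_le (Finset.sup_mono_fun fun i _ => le_max_left _ _)
      (Finset.sup_mono_fun fun i _ => le_max_right _ _)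
lemma add_finsetSup {ι : Type*} (s : Finset ι) (a : Rmax) (f : ι → Rmax) :
    a + s.sup f = s.sup fun i => a + f i := by
  induction s using Finset.cons_induction with
  | empty => simp
  | cons i s hi ih => rw [Finset.sup_cons, Finset.sup_cons, add_max, ih]
lemma mdot_combo {n : ℕ} (w x y : Fin n → Rmax) (α β : Rmax) :
    mdot w (fun i => max (α + x i) (β + y i)) = max (α + mdot w x) (β + mdot w y) := by
  unfold mdot
  rw [add_finsetSup, add_finsetSup, ← finsetSup_max]
  apply Finset.sup_congr rfl
  intro i _
  rw [add_max]
  congr 1 <;> · rw [← add_assoc, add_comm (w i), add_assoc]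

/-- max-plus affine function -/
def aff {n : ℕ} (w : Fin n → Rmax) (c : Rmax) (x : Fin n → Rmax) : Rmax := max (mdot w x) c

lemma aff_combo {n : ℕ} (w : Fin n → Rmax) (d : Rmax) (x y : Fin n → Rmax) {α β : Rmax}
    (hαβ : max α β = 0) :
    aff w d (fun i => max (α + x i) (β + y i)) = max (α + aff w d x) (β + aff w d y) := by
  unfold aff
  rw [mdot_combo, add_max, add_max]
  have h : max (α + d) (β + d) = d := by rw [← max_add, hαβ, zero_add]
  rw [max_max_max_comm, h]

-- rdiff
lemma rdiff_of_lt {a b : Rmax} (h : b < a) : rdiff a b = a := if_pos h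
lemma rdiff_of_le {a b : Rmax} (h : a ≤ b) : rdiff a b = ⊥ := if_neg (not_lt.2 h)
lemma rdiff_le_self (a b : Rmax) : rdiff a b ≤ a := by
  unfold rdiff; split
  · exact le_refl a
  · exact bot_le
lemma rdiff_le_iff {a b t : Rmax} : rdiff a b ≤ t ↔ (b < a → a ≤ t) := by
  unfold rdiff; split <;> simp_all

/-- the basic residuated-difference-of-affine building block -/
def trm {n : ℕ} (w' : Fin n → Rmax) (d' : Rmax) (w'' : Fin n → Rmax) (d'' : Rmax)
    (x : Fin n → Rmax) : Rmax := rdiff (aff w' d' x) (aff w'' d'' x)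

/-- max-plus convexity of the building blocks -/
lemma trm_combo {n : ℕ} (w' : Fin n → Rmax) (d' : Rmax) (w'' : Fin n → Rmax) (d'' : Rmax)
    {x y : Fin n → Rmax} {t s α β : Rmax} (hαβ : max α β = 0)
    (hx : trm w' d' w'' d'' x ≤ t) (hy : trm w' d' w'' d'' y ≤ s) :
    trm w' d' w'' d'' (fun i => max (α + x i) (β + y i)) ≤ max (α + t) (β + s) := by
  unfold trm at *
  rw [rdiff_le_iff] at hx hy ⊢
  rw [aff_combo _ _ _ _ hαβ, aff_combo _ _ _ _ hαβ]
  intro hlt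
  rcases max_cases (α + aff w' d' x) (β + aff w' d' y) with ⟨hA, hA2⟩ | ⟨hA, hA2⟩
  · rw [hA] at hlt ⊢
    have h1 : α + aff w'' d'' x < α + aff w' d' x :=
      lt_of_le_of_lt (le_max_left _ _) hlt
    have h2 : aff w'' d'' x < aff w' d' x := lt_of_add_lt_add_left h1
    exact le_trans (add_le_add_right (hx h2) α) (le_max_left _ _)
  · rw [hA] at hlt ⊢
    have h1 : β + aff w'' d'' y < β + aff w' d' y :=
      lt_of_le_of_lt (le_max_right _ _) hlt
    have h2 : aff w'' d'' y < aff w' d' y := lt_of_add_lt_add_left h1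
    exact le_trans (add_le_add_right (hy h2) β) (le_max_right _ _)

-- continuity
def addIso (r : ℝ) : Rmax ≃o Rmax where
  toFun x := (r:Rmax) + x
  invFun x := ((-r:ℝ):Rmax) + x
  left_inv x := by
    induction x using WithBot.recBotCoe with
    | bot => simp
    | coe a => show ((-r:ℝ):Rmax) + ((r:Rmax) + (a:Rmax)) = _; rw [← WithBot.coe_add, ← WithBot.coe_add]; norm_num
  right_inv x := by
    induction x using WithBot.recBotCoe with
    | bot => simp
    | coe a => show ((r:ℝ):Rmax) + (((-r:ℝ):Rmax) + (a:Rmax)) = _; rw [← WithBot.coe_add, ← WithBot.coe_add]; norm_num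
  map_rel_iff' := add_le_add_left_iff

lemma continuous_const_add (a : Rmax) : Continuous fun x : Rmax => a + x := by
  induction a using WithBot.recBotCoe with
  | bot =>
    have h : (fun x : Rmax => ⊥ + x) = fun _ => (⊥:Rmax) := funext fun x => by simp
    rw [h]; exact continuous_const
  | coe r => exact (addIso r).continuous

lemma continuous_finsetSup {ι X : Type*} [TopologicalSpace X] (s : Finset ι)
    (f : ι → X → Rmax) (hf : ∀ i, Continuous (f i)) :
    Continuous fun x => s.sup (fun i => f i x) := by
  induction s using Finset.cons_induction with
  | empty => simpa using (continuous_const : Continuous fun _ : X => (⊥:Rmax))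
  | cons i s hi ih => simpa [Finset.sup_cons] using (hf i).max ih

lemma continuous_aff {n : ℕ} (w : Fin n → Rmax) (c : Rmax) : Continuous (aff w c) := by
  unfold aff mdot
  exact (continuous_finsetSup _ _
    (fun i => (continuous_const_add (w i)).comp (continuous_apply i))).max continuous_const

lemma isClosed_toE_le (t : EReal) : IsClosed {a : Rmax | Rmax.toE a ≤ t} := by
  induction t with
  | bot =>
    have h : {a : Rmax | Rmax.toE a ≤ ⊥} = Set.Iic ⊥ := by
      ext a
      induction a using WithBot.recBotCoe <;> simp [Rmax.toE]
    rw [h]; exact isClosed_Iic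
  | coe r =>
    have h : {a : Rmax | Rmax.toE a ≤ (r:EReal)} = Set.Iic (r:Rmax) := by
      ext a
      show Rmax.toE a ≤ (r:EReal) ↔ a ≤ (r:Rmax)
      rw [← toE_coe r, toE_le_toE_iff]
    rw [h]; exact isClosed_Iic
  | top =>
    have h : {a : Rmax | Rmax.toE a ≤ ⊤} = Set.univ := by
      ext a; simp
    rw [h]; exact isClosed_univ

lemma isClosed_trm_level {n : ℕ} (w' : Fin n → Rmax) (d' : Rmax) (w'' : Fin n → Rmax)
    (d'' : Rmax) (t : EReal) :
    IsClosed {x : Fin n → Rmax | Rmax.toE (trm w' d' w'' d'' x) ≤ t} := by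
  have h : {x : Fin n → Rmax | Rmax.toE (trm w' d' w'' d'' x) ≤ t}
      = {x | aff w' d' x ≤ aff w'' d'' x} ∪ {x | Rmax.toE (aff w' d' x) ≤ t} := by
    ext x
    simp only [Set.mem_setOf_eq, Set.mem_union]
    constructor
    · intro h
      by_cases hAB : aff w' d' x ≤ aff w'' d'' x
      · exact Or.inl hAB
      · right
        rw [trm, rdiff_of_lt (not_le.1 hAB)] at h
        exact h
    · rintro (h | h)
      · rw [trm, rdiff_of_le h]
        exact bot_le
      · exact le_trans (toE_mono (rdiff_le_self _ _)) h
  rw [h]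
  exact (isClosed_le (continuous_aff w' d') (continuous_aff w'' d'')).union
    ((isClosed_toE_le t).preimage (continuous_aff w' d'))

end MP


-- ===================== separation theorem =====================
namespace MP

lemma mdot_sing {m : ℕ} (k : Fin m) (a : Rmax) (z : Fin m → Rmax) :
    mdot (fun j => if j = k then a else ⊥) z = a + z k := by
  apply le_antisymm
  · rw [mdot_le_iff]
    intro j
    by_cases h : j = k
    · subst h; simp
    · simp [h]
  · simpa using le_mdot (fun j => if j = k then a else ⊥) z k

lemma tendsto_bot {g : ℕ → Rmax} (hg : ∀ i, g i ≤ ((-(i:ℝ) : ℝ):Rmax)) :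
    Filter.Tendsto g Filter.atTop (nhds ⊥) := by
  rw [tendsto_order]
  refine ⟨fun b hb => absurd hb not_lt_bot, fun b hb => ?_⟩
  induction b using WithBot.recBotCoe with
  | bot => exact absurd hb (lt_irrefl _)
  | coe br =>
    obtain ⟨N, hN⟩ := exists_nat_gt (-br)
    filter_upwards [Filter.eventually_ge_atTop N] with i hi
    refine lt_of_le_of_lt (hg i) ?_
    rw [WithBot.coe_lt_coe]
    have h2 : (N:ℝ) ≤ (i:ℝ) := by exact_mod_cast hi
    linarith

lemma le_of_forall_le_add_eps {a : Rmax} {b : ℝ}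
    (h : ∀ i : ℕ, a ≤ ((b + 1/((i:ℝ)+1) : ℝ) : Rmax)) : a ≤ ((b:ℝ):Rmax) := by
  induction a using WithBot.recBotCoe with
  | bot => exact bot_le
  | coe c =>
    rw [WithBot.coe_le_coe]
    by_contra hc
    push_neg at hc
    obtain ⟨i, hi⟩ := exists_nat_one_div_lt (sub_pos.2 hc)
    have h2 := WithBot.coe_le_coe.1 (h i)
    have h3 : (1:ℝ)/((i:ℝ)+1) < c - b := by exact_mod_cast hi
    linarith

lemma separation {m : ℕ} {C : Set (Fin m → Rmax)} (hCc : IsClosed C) (hCv : MPConvex C)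
    {y : Fin m → Rmax} (hy : y ∉ C) :
    ∃ (u v : Fin m → Rmax) (c d : Rmax),
      (∀ z ∈ C, max (mdot u z) c ≤ max (mdot v z) d) ∧
      max (mdot v y) d < max (mdot u y) c := by
  classical
  rcases Set.eq_empty_or_nonempty C with hCe | hCne
  · refine ⟨fun _ => ⊥, fun _ => ⊥, 0, ⊥, ?_, ?_⟩
    · intro z hz; rw [hCe] at hz; exact absurd hz (Set.notMem_empty z)
    · rw [mdot_bot, max_self]
      exact lt_of_lt_of_le (bot_lt_iff_ne_bot.2 (by simp : (0:Rmax) ≠ ⊥)) (le_max_right _ _)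
  by_cases hm : m = 0
  · exfalso
    obtain ⟨z, hz⟩ := hCne
    subst hm
    exact hy ((funext fun i => i.elim0 : y = z) ▸ hz)
  haveI hne : Nonempty (Fin m) := ⟨⟨0, Nat.pos_of_ne_zero hm⟩⟩
  set yr : ℝ → Fin m → Rmax := fun r j => if y j = ⊥ then ((r:ℝ):Rmax) else y j with hyr_def
  have hyr_ne : ∀ r j, yr r j ≠ ⊥ := by
    intro r j
    by_cases h : y j = ⊥ <;> simp [hyr_def, h]
  set D : ℝ → Set (Fin m → Rmax) := fun r => {z | z ∈ C ∧ ∀ j, z j ≤ yr r j} with hD_def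
  have hDclosed : ∀ r, IsClosed (D r) := by
    intro r
    have he : D r = C ∩ ⋂ j, {z | z j ≤ yr r j} := by
      ext z; simp [hD_def, Set.mem_iInter]
    rw [he]
    exact hCc.inter (isClosed_iInter fun j =>
      isClosed_le (continuous_apply j) continuous_const)
  have hDcompact : ∀ r, IsCompact (D r) := by
    intro r
    apply IsCompact.of_isClosed_subset
      (isCompact_univ_pi fun j => isCompact_Icc (a := (⊥:Rmax)) (b := yr r j)) (hDclosed r)
    intro z hz
    rw [Set.mem_univ_pi]
    exact fun j => ⟨bot_le, hz.2 j⟩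
  set ν : ℝ → Fin m → Rmax := fun r k => sSup ((fun z => z k) '' (D r)) with hν_def
  have hνub : ∀ r, ∀ z ∈ D r, ∀ k, z k ≤ ν r k := by
    intro r z hz k
    apply le_csSup ⟨yr r k, ?_⟩ (Set.mem_image_of_mem _ hz)
    rintro w ⟨z', hz', rfl⟩
    exact hz'.2 k
  have hνmem : ∀ r, (D r).Nonempty → ν r ∈ D r := by
    intro r hDne
    have hsel : ∀ k, ∃ z, z ∈ D r ∧ z k = ν r k := by
      intro k
      have himg : IsCompact ((fun z => z k) '' (D r)) :=
        (hDcompact r).image (continuous_apply k)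
      obtain ⟨z, hz, hzk⟩ := himg.sSup_mem (hDne.image _)
      exact ⟨z, hz, hzk⟩
    choose zs hzs1 hzs2 using hsel
    have hsup_mem : (Finset.univ.sup' Finset.univ_nonempty zs) ∈ D r := by
      apply Finset.sup'_induction
      · intro a ha b hb
        have hcm := hCv a ha.1 b hb.1 0 0 (max_self 0)
        have heq : a ⊔ b = fun i => max ((0:Rmax) + a i) ((0:Rmax) + b i) := by
          funext i
          simp [Pi.sup_apply, zero_add, max_def, Max.max]
        refine ⟨heq ▸ hcm, fun j => ?_⟩
        have : (a ⊔ b) j = max (a j) (b j) := by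
          simp [Pi.sup_apply, max_def, Max.max]
        rw [this]
        exact max_le (ha.2 j) (hb.2 j)
      · intro b _
        exact hzs1 b
    have hsup_eq : Finset.univ.sup' Finset.univ_nonempty zs = ν r := by
      funext k
      apply le_antisymm
      · exact hνub r _ hsup_mem k
      · calc ν r k = zs k k := (hzs2 k).symm
          _ ≤ _ := (Finset.le_sup' zs (Finset.mem_univ k)) k
    rw [← hsup_eq]
    exact hsup_mem
  have hkey : ∃ r : ℝ, yr r ∉ C ∧ (D r = ∅ ∨ ∃ k, y k ≠ ⊥ ∧ ν r k < y k) := by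
    by_contra hcon
    push_neg at hcon
    have hq : ∀ i : ℕ, ∃ q : Fin m → Rmax, q ∈ C ∧ (∀ j, y j ≠ ⊥ → q j = y j) ∧
        ∀ j, y j = ⊥ → q j ≤ ((-(i:ℝ) : ℝ):Rmax) := by
      intro i
      by_cases h : yr (-(i:ℝ)) ∈ C
      · refine ⟨yr (-(i:ℝ)), h, fun j hj => ?_, fun j hj => ?_⟩
        · simp [hyr_def, hj]
        · simp [hyr_def, hj]
      · obtain ⟨hne', hag⟩ := hcon (-(i:ℝ)) h
        have hDne : (D (-(i:ℝ))).Nonempty := hne'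
        have hmem := hνmem _ hDne
        refine ⟨ν (-(i:ℝ)), hmem.1, fun j hj => ?_, fun j hj => ?_⟩
        · refine le_antisymm ?_ (hag j hj)
          have := hmem.2 j
          simpa [hyr_def, hj] using this
        · have := hmem.2 j
          simpa [hyr_def, hj] using this
    choose q hq1 hq2 hq3 using hq
    have hten : Filter.Tendsto q Filter.atTop (nhds y) := by
      rw [tendsto_pi_nhds]
      intro j
      by_cases hj : y j = ⊥
      · rw [hj]
        exact tendsto_bot (fun i => hq3 i j hj)
      · have he : (fun i => q i j) = fun _ => y j := funext fun i => hq2 i j hj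
        rw [he]
        exact tendsto_const_nhds
    exact hy (hCc.mem_of_tendsto hten (Filter.Eventually.of_forall hq1))
  obtain ⟨r, hyrC, hdisj⟩ := hkey
  choose qf hqf using fun j => WithBot.ne_bot_iff_exists.1 (hyr_ne r j)
  set v : Fin m → Rmax := fun j => (((-qf j : ℝ)):Rmax) with hv_def
  have hyS : ∀ j, y j ≠ ⊥ → yr r j = y j := by
    intro j hj; simp [hyr_def, hj]
  have hvy : mdot v y ≤ 0 := by
    rw [mdot_le_iff]
    intro j
    by_cases hj : y j = ⊥
    · rw [hj]; simp
    · have he : y j = ((qf j : ℝ):Rmax) := by rw [← hyS j hj]; exact (hqf j).symm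
      rw [he, hv_def]
      rw [← WithBot.coe_add]
      norm_num
  rcases Set.eq_empty_or_nonempty (D r) with hDe | hDne
  · -- D r empty : epsilon halfspace
    have hnot : ¬ ∀ ε : ℝ, 0 < ε → ∃ z ∈ C, ∀ j, z j ≤ yr r j + ((ε:ℝ):Rmax) := by
      intro hall
      set E : ℕ → Set (Fin m → Rmax) :=
        fun i => {z | z ∈ C ∧ ∀ j, z j ≤ yr r j + ((1/((i:ℝ)+1) : ℝ):Rmax)} with hE_def
      have hEsub : ∀ i, E (i+1) ⊆ E i := by
        intro i z hz
        refine ⟨hz.1, fun j => le_trans (hz.2 j) (add_le_add_right ?_ _)⟩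
        rw [WithBot.coe_le_coe]
        have h0 : (0:ℝ) < (i:ℝ)+1 := by positivity
        apply one_div_le_one_div_of_le h0
        push_cast
        linarith
      have hEne : ∀ i, (E i).Nonempty := by
        intro i
        obtain ⟨z, hz1, hz2⟩ := hall (1/((i:ℝ)+1)) (by positivity)
        exact ⟨z, hz1, hz2⟩
      have hEclosed : ∀ i, IsClosed (E i) := by
        intro i
        have he : E i = C ∩ ⋂ j, {z | z j ≤ yr r j + ((1/((i:ℝ)+1) : ℝ):Rmax)} := by
          ext z; simp [hE_def, Set.mem_iInter]
        rw [he]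
        exact hCc.inter (isClosed_iInter fun j =>
          isClosed_le (continuous_apply j) continuous_const)
      have hEcompact : IsCompact (E 0) := by
        apply IsCompact.of_isClosed_subset
          (isCompact_univ_pi fun j => isCompact_Icc (a := (⊥:Rmax))
            (b := yr r j + ((1:ℝ):Rmax))) (hEclosed 0)
        intro z hz
        rw [Set.mem_univ_pi]
        intro j
        refine ⟨bot_le, le_trans (hz.2 j) (add_le_add_right ?_ _)⟩
        rw [WithBot.coe_le_coe]
        norm_num
      obtain ⟨z, hz⟩ := IsCompact.nonempty_iInter_of_sequence_nonempty_isCompact_isClosed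
        E hEsub hEne hEcompact hEclosed
      rw [Set.mem_iInter] at hz
      have hzD : z ∈ D r := by
        refine ⟨(hz 0).1, fun j => ?_⟩
        rw [← hqf j]
        apply le_of_forall_le_add_eps
        intro i
        have h1 := (hz i).2 j
        rw [← hqf j, ← WithBot.coe_add] at h1
        exact h1
      rw [hDe] at hzD
      exact hzD
    push_neg at hnot
    obtain ⟨ε, hε, hsep⟩ := hnot
    refine ⟨fun _ => ⊥, v, ((ε:ℝ):Rmax), ⊥, ?_, ?_⟩
    · intro z hz
      obtain ⟨j, hj⟩ := hsep z hz
      rw [mdot_bot, max_eq_right bot_le]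
      rw [← hqf j, ← WithBot.coe_add] at hj
      have hzj : ((qf j + ε : ℝ):Rmax) < z j := hj
      by_cases hb : z j = ⊥
      · rw [hb] at hzj
        exact absurd hzj (by simp)
      · obtain ⟨a, ha⟩ := WithBot.ne_bot_iff_exists.1 hb
        have hlt : qf j + ε < a := by
          rw [← ha] at hzj
          exact_mod_cast hzj
        have h2 : ((ε:ℝ):Rmax) ≤ v j + z j := by
          rw [hv_def, ← ha, ← WithBot.coe_add, WithBot.coe_le_coe]
          linarith
        exact le_trans (le_trans h2 (le_mdot v z j)) (le_max_left _ _)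
    · rw [mdot_bot]
      have h1 : max (mdot v y) ⊥ ≤ 0 := max_le hvy bot_le
      have h2 : (0:Rmax) < ((ε:ℝ):Rmax) := by exact_mod_cast hε
      exact lt_of_le_of_lt h1 (lt_of_lt_of_le h2 (le_max_right _ _))
  · -- D r nonempty
    have hkk : ∃ k, y k ≠ ⊥ ∧ ν r k < y k := by
      rcases hdisj with h | h
      · exact absurd h (Set.nonempty_iff_ne_empty.1 hDne)
      · exact h
    obtain ⟨k, hyk, hνk⟩ := hkk
    have hνD := hνmem r hDne
    have hβ : ∀ z ∈ C, ∃ βr : ℝ, ((βr:ℝ):Rmax) + z k ≤ ν r k ∧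
        (((-βr : ℝ)):Rmax) ≤ max (mdot v z) 0 := by
      intro z hz
      set g : Fin m → ℝ := fun j => min 0 (qf j - ((z j).unbotD (qf j))) with hg_def
      set βr : ℝ := Finset.univ.inf' Finset.univ_nonempty g with hβr_def
      have hβr0 : βr ≤ 0 :=
        le_trans (Finset.inf'_le g (Finset.mem_univ (Classical.arbitrary _)))
          (min_le_left _ _)
      have hβrz : ∀ j, ((βr:ℝ):Rmax) + z j ≤ yr r j := by
        intro j
        by_cases hb : z j = ⊥
        · rw [hb]
          simp [hyr_ne r j, bot_lt_iff_ne_bot]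
        · obtain ⟨a, ha⟩ := WithBot.ne_bot_iff_exists.1 hb
          rw [← hqf j, ← ha, ← WithBot.coe_add, WithBot.coe_le_coe]
          have h1 : βr ≤ g j := Finset.inf'_le g (Finset.mem_univ j)
          have h2 : g j ≤ qf j - a := by
            rw [hg_def]
            simp only [← ha, WithBot.unbotD_coe]
            exact min_le_right _ _
          linarith
      have hmax0 : max (0:Rmax) ((βr:ℝ):Rmax) = 0 := by
        apply max_eq_left
        exact_mod_cast hβr0
      have hcomb := hCv _ hνD.1 z hz 0 ((βr:ℝ):Rmax) hmax0
      have hcombD : (fun i => max ((0:Rmax) + ν r i) (((βr:ℝ):Rmax) + z i)) ∈ D r := by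
        refine ⟨hcomb, fun j => ?_⟩
        simp only [zero_add]
        exact max_le (hνD.2 j) (hβrz j)
      have h1 : ((βr:ℝ):Rmax) + z k ≤ ν r k :=
        le_trans (le_max_right _ _) (hνub r _ hcombD k)
      refine ⟨βr, h1, ?_⟩
      obtain ⟨j, _, hj⟩ := Finset.exists_mem_eq_inf' Finset.univ_nonempty g
      have hj' : βr = g j := hj
      by_cases hb : z j = ⊥
      · have hβ0 : βr = 0 := by
          rw [hj']
          show min 0 (qf j - ((z j).unbotD (qf j))) = 0
          rw [hb]
          simp
        rw [hβ0]
        norm_num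
      · obtain ⟨a, ha⟩ := WithBot.ne_bot_iff_exists.1 hb
        have hgj : g j = min 0 (qf j - a) := by
          show min 0 (qf j - ((z j).unbotD (qf j))) = min 0 (qf j - a)
          rw [← ha, WithBot.unbotD_coe]
        rcases min_cases 0 (qf j - a) with ⟨he, _⟩ | ⟨he, _⟩
        · have hβ0 : βr = 0 := by rw [hj', hgj]; exact he
          rw [hβ0]
          norm_num
        · have hβa : βr = qf j - a := by rw [hj', hgj]; exact he
          have h2 : (((-βr:ℝ)):Rmax) ≤ v j + z j := by
            rw [hv_def, ← ha, ← WithBot.coe_add, WithBot.coe_le_coe, hβa]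
            linarith
          exact le_trans h2 (le_trans (le_mdot v z j) (le_max_left _ _))
    rcases eq_or_ne (ν r k) ⊥ with hνbot | hνne
    · have hzk : ∀ z ∈ C, z k = ⊥ := by
        intro z hz
        obtain ⟨βr, h1, _⟩ := hβ z hz
        rw [hνbot, le_bot_iff, WithBot.add_eq_bot] at h1
        rcases h1 with h | h
        · exact absurd h WithBot.coe_ne_bot
        · exact h
      refine ⟨fun j => if j = k then 0 else ⊥, fun _ => ⊥, ⊥, ⊥, ?_, ?_⟩
      · intro z hz
        rw [mdot_sing, hzk z hz, mdot_bot]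
        simp
      · rw [mdot_sing, mdot_bot, zero_add, max_self, max_eq_left bot_le]
        exact bot_lt_iff_ne_bot.2 hyk
    · obtain ⟨νk, hνk_eq⟩ := WithBot.ne_bot_iff_exists.1 hνne
      refine ⟨fun j => if j = k then (((-νk:ℝ)):Rmax) else ⊥, v, ⊥, 0, ?_, ?_⟩
      · intro z hz
        rw [mdot_sing, max_eq_left bot_le]
        obtain ⟨βr, h1, h2⟩ := hβ z hz
        by_cases hb : z k = ⊥
        · rw [hb]
          simp
        · obtain ⟨a, ha⟩ := WithBot.ne_bot_iff_exists.1 hb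
          rw [← ha, ← hνk_eq, ← WithBot.coe_add, WithBot.coe_le_coe] at h1
          have h3 : (((-νk:ℝ)):Rmax) + z k ≤ (((-βr:ℝ)):Rmax) := by
            rw [← ha, ← WithBot.coe_add, WithBot.coe_le_coe]
            linarith
          exact le_trans h3 h2
      · rw [mdot_sing, max_eq_left bot_le]
        obtain ⟨yk, hyk_eq⟩ := WithBot.ne_bot_iff_exists.1 hyk
        have hL : max (mdot v y) 0 ≤ 0 := max_le hvy le_rfl
        have hνyk : νk < yk := by
          rw [← hνk_eq, ← hyk_eq, WithBot.coe_lt_coe] at hνk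
          exact hνk
        have hR : (0:Rmax) < (((-νk:ℝ)):Rmax) + y k := by
          rw [← hyk_eq, ← WithBot.coe_add]
          exact_mod_cast (by linarith : (0:ℝ) < -νk + yk)
        exact lt_of_le_of_lt hL hR

end MP


-- ===================== forward direction machinery =====================
namespace MP

lemma max_rcomm (a b c : Rmax) : max (max a b) c = max (max a c) b := by
  rw [max_assoc, max_comm b c, ← max_assoc]

lemma mdot_snoc {n : ℕ} (u : Fin (n+1) → Rmax) (x : Fin n → Rmax) (s : Rmax) :
    mdot u (Fin.snoc x s) = max (mdot (fun i => u i.castSucc) x) (u (Fin.last n) + s) := by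
  apply le_antisymm
  · rw [mdot_le_iff]
    intro i
    induction i using Fin.lastCases with
    | last =>
      rw [Fin.snoc_last]
      exact le_max_right _ _
    | cast i =>
      rw [Fin.snoc_castSucc]
      exact le_trans (le_mdot (fun i => u i.castSucc) x i) (le_max_left _ _)
  · apply max_le
    · rw [mdot_le_iff]
      intro i
      have h := le_mdot u (Fin.snoc x s) i.castSucc
      rw [Fin.snoc_castSucc] at h
      exact h
    · have h := le_mdot u (Fin.snoc x s) (Fin.last n)
      rw [Fin.snoc_last] at h
      exact h

/-- the epigraph as a subset of `ℝmax^{n+1}` -/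
def CC {n : ℕ} (f : (Fin n → Rmax) → EReal) : Set (Fin (n+1) → Rmax) :=
  {z | f (fun i => z i.castSucc) ≤ Rmax.toE (z (Fin.last n))}

lemma snoc_mem_CC {n : ℕ} {f : (Fin n → Rmax) → EReal} {x : Fin n → Rmax} {s : Rmax} :
    (Fin.snoc x s : Fin (n+1) → Rmax) ∈ CC f ↔ f x ≤ Rmax.toE s := by
  have h1 : (fun i : Fin n => (Fin.snoc x s : Fin (n+1) → Rmax) i.castSucc) = x :=
    funext fun i => by simp
  have h2 : (Fin.snoc x s : Fin (n+1) → Rmax) (Fin.last n) = s := by simp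
  show f (fun i => (Fin.snoc x s : Fin (n+1) → Rmax) i.castSucc)
      ≤ Rmax.toE ((Fin.snoc x s : Fin (n+1) → Rmax) (Fin.last n)) ↔ _
  rw [h1, h2]

lemma Epi_closed {n : ℕ} {f : (Fin n → Rmax) → EReal} (hf : LSC f) : IsClosed (Epi f) := by
  have he : Epi f = ⋂ (q : ℚ),
      {p : (Fin n → Rmax) × Rmax | f p.1 ≤ (((q:ℝ):ℝ):EReal) ∨ (((q:ℝ)):Rmax) ≤ p.2} := by
    ext p
    simp only [Epi, Set.mem_setOf_eq, Set.mem_iInter]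
    constructor
    · intro h q
      rcases le_or_gt (((q:ℝ)):Rmax) p.2 with hq | hq
      · exact Or.inr hq
      · refine Or.inl (le_trans h ?_)
        have := toE_mono hq.le
        rw [toE_coe] at this
        exact this
    · intro h
      by_contra hc
      obtain ⟨qq, h1, h2⟩ := EReal.exists_rat_btwn_of_lt (not_le.1 hc)
      rcases h qq with h3 | h3
      · exact absurd h3 (not_le.2 h2)
      · have h4 := toE_mono h3
        rw [toE_coe] at h4
        exact absurd h1 (not_lt.2 h4)
  rw [he]
  refine isClosed_iInter fun q => ?_
  have he2 : {p : (Fin n → Rmax) × Rmax | f p.1 ≤ (((q:ℝ):ℝ):EReal) ∨ (((q:ℝ)):Rmax) ≤ p.2}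
      = (Prod.fst ⁻¹' {x | f x ≤ (((q:ℝ):ℝ):EReal)}) ∪ (Prod.snd ⁻¹' Set.Ici (((q:ℝ)):Rmax)) := by
    ext p; rfl
  rw [he2]
  exact ((hf _).preimage continuous_fst).union (isClosed_Ici.preimage continuous_snd)

lemma CC_closed {n : ℕ} {f : (Fin n → Rmax) → EReal} (hf : LSC f) : IsClosed (CC f) := by
  have he : CC f = (fun z : Fin (n+1) → Rmax =>
      ((fun i => z i.castSucc, z (Fin.last n)) : (Fin n → Rmax) × Rmax)) ⁻¹' Epi f := rfl
  rw [he]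
  have hcont : Continuous (fun z : Fin (n+1) → Rmax =>
      ((fun i => z i.castSucc, z (Fin.last n)) : (Fin n → Rmax) × Rmax)) :=
    (continuous_pi fun i : Fin n =>
      (continuous_apply (i.castSucc : Fin (n+1)))).prodMk
      (continuous_apply (Fin.last n))
  exact (Epi_closed hf).preimage hcont

lemma CC_convex {n : ℕ} {f : (Fin n → Rmax) → EReal} (hf : MPConvexFun f) :
    MPConvex (CC f) := by
  intro z hz w hw α β hαβ
  have h := hf (fun i => z i.castSucc, z (Fin.last n)) hz
    (fun i => w i.castSucc, w (Fin.last n)) hw α β hαβ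
  simp only [Epi, Set.mem_setOf_eq] at h
  simp only [CC, Set.mem_setOf_eq]
  exact h

lemma exists_big_s (s₁ bound : Rmax) (u0r : ℝ) :
    ∃ sr : ℝ, s₁ ≤ ((sr:ℝ):Rmax) ∧ bound < ((u0r + sr : ℝ):Rmax) := by
  refine ⟨max (s₁.unbotD 0) (bound.unbotD 0 - u0r + 1), ?_, ?_⟩
  · by_cases hb : s₁ = ⊥
    · rw [hb]; exact bot_le
    · obtain ⟨a, ha⟩ := WithBot.ne_bot_iff_exists.1 hb
      rw [← ha, WithBot.coe_le_coe, WithBot.unbotD_coe]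
      exact le_max_left _ _
  · by_cases hb : bound = ⊥
    · rw [hb]; exact WithBot.bot_lt_coe _
    · obtain ⟨b, hbb⟩ := WithBot.ne_bot_iff_exists.1 hb
      rw [← hbb, WithBot.coe_lt_coe, WithBot.unbotD_coe]
      have := le_max_right (s₁.unbotD 0) (b - u0r + 1)
      linarith

lemma aff_shift {n : ℕ} (kk : Rmax) (w : Fin n → Rmax) (c : Rmax) (x : Fin n → Rmax) :
    aff (fun i => kk + w i) (kk + c) x = kk + aff w c x := by
  unfold aff
  rw [add_max]
  congr 1
  unfold mdot
  rw [add_finsetSup]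
  exact Finset.sup_congr rfl fun i _ => (add_assoc kk (w i) (x i))

lemma trm_shift {n : ℕ} (kr : ℝ) (w' : Fin n → Rmax) (d' : Rmax) (w'' : Fin n → Rmax)
    (d'' : Rmax) (x : Fin n → Rmax) :
    trm (fun i => ((kr:ℝ):Rmax) + w' i) (((kr:ℝ):Rmax) + d')
      (fun i => ((kr:ℝ):Rmax) + w'' i) (((kr:ℝ):Rmax) + d'') x
      = ((kr:ℝ):Rmax) + trm w' d' w'' d'' x := by
  unfold trm
  rw [aff_shift, aff_shift]
  by_cases h : aff w'' d'' x < aff w' d' x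
  · rw [rdiff_of_lt h, rdiff_of_lt (add_lt_add_left_iff.2 h)]
  · rw [rdiff_of_le (not_lt.1 h), rdiff_of_le (add_le_add_right (not_lt.1 h) _)]
    rw [WithBot.add_bot]

lemma exists_gt_coe (t : Rmax) : ∃ r : ℝ, t < ((r:ℝ):Rmax) := by
  by_cases hb : t = ⊥
  · exact ⟨0, hb ▸ WithBot.bot_lt_coe 0⟩
  · obtain ⟨a, ha⟩ := WithBot.ne_bot_iff_exists.1 hb
    exact ⟨a + 1, by rw [← ha, WithBot.coe_lt_coe]; linarith⟩

lemma exists_term {n : ℕ} {f : (Fin n → Rmax) → EReal} (hconv : MPConvexFun f)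
    (hlsc : LSC f) {x₀ : Fin n → Rmax} {t : Rmax} (ht : Rmax.toE t < f x₀) :
    ∃ (w' : Fin n → Rmax) (d' : Rmax) (w'' : Fin n → Rmax) (d'' : Rmax),
      (∀ x, Rmax.toE (trm w' d' w'' d'' x) ≤ f x) ∧ t < trm w' d' w'' d'' x₀ := by
  classical
  -- the constant-term construction, used whenever f ≡ ⊤
  by_cases htop : ∀ x, f x = ⊤
  · obtain ⟨r, hr⟩ := exists_gt_coe t
    refine ⟨fun _ => ⊥, ((r:ℝ):Rmax), fun _ => ⊥, ⊥, fun x => by rw [htop x]; exact le_top, ?_⟩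
    unfold trm aff
    rw [mdot_bot, max_eq_right bot_le, max_self,
      rdiff_of_lt (WithBot.bot_lt_coe r)]
    exact hr
  push_neg at htop
  obtain ⟨x₁, hx₁⟩ := htop
  obtain ⟨s₁, hs₁⟩ := exists_toE_eq (lt_top_iff_ne_top.2 hx₁)
  have hyC : (Fin.snoc x₀ t : Fin (n+1) → Rmax) ∉ CC f := by
    rw [snoc_mem_CC]
    exact not_le.2 ht
  obtain ⟨u, v, c, d, hsep, hstrict⟩ := separation (CC_closed hlsc) (CC_convex hconv) hyC
  set u1 : Fin n → Rmax := fun i => u i.castSucc with hu1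
  set v1 : Fin n → Rmax := fun i => v i.castSucc with hv1
  set u0 : Rmax := u (Fin.last n) with hu0d
  set v0 : Rmax := v (Fin.last n) with hv0d
  set A : (Fin n → Rmax) → Rmax := fun x => max (mdot u1 x) c with hA
  set B : (Fin n → Rmax) → Rmax := fun x => max (mdot v1 x) d with hB
  have hsep' : ∀ x (s : Rmax), f x ≤ Rmax.toE s →
      max (A x) (u0 + s) ≤ max (B x) (v0 + s) := by
    intro x s hxs
    have h1 := hsep (Fin.snoc x s) (snoc_mem_CC.2 hxs)
    rw [mdot_snoc, mdot_snoc, max_rcomm (mdot u1 x) (u0 + s) c,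
      max_rcomm (mdot v1 x) (v0 + s) d] at h1
    exact h1
  have hstrict' : max (B x₀) (v0 + t) < max (A x₀) (u0 + t) := by
    rw [mdot_snoc, mdot_snoc, max_rcomm (mdot u1 x₀) (u0 + t) c,
      max_rcomm (mdot v1 x₀) (v0 + t) d] at hstrict
    exact hstrict
  by_cases hv0 : v0 = ⊥
  · -- v0 = ⊥
    have hAB : ∀ x, B x < A x → f x = ⊤ := by
      intro x hx
      by_contra hxt
      obtain ⟨s, hs⟩ := exists_toE_eq (lt_top_iff_ne_top.2 hxt)
      have h1 := hsep' x s (le_of_eq hs.symm)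
      rw [hv0, WithBot.bot_add, max_eq_left bot_le] at h1
      exact absurd hx (not_lt.2 (le_trans (le_max_left _ _) h1))
    have hBA0 : B x₀ < A x₀ := by
      rw [hv0, WithBot.bot_add, max_eq_left bot_le] at hstrict'
      rcases max_cases (A x₀) (u0 + t) with ⟨hh, _⟩ | ⟨hh, _⟩
      · rw [hh] at hstrict'; exact hstrict'
      · exfalso
        rw [hh] at hstrict'
        have hu0 : u0 ≠ ⊥ := by
          intro h
          rw [h, WithBot.bot_add] at hstrict'
          exact not_lt_bot hstrict'
        obtain ⟨u0r, hu0r⟩ := WithBot.ne_bot_iff_exists.1 hu0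
        obtain ⟨sr, hsr1, hsr2⟩ := exists_big_s s₁ (B x₁) u0r
        have hfs : f x₁ ≤ Rmax.toE ((sr:ℝ):Rmax) := hs₁ ▸ toE_mono hsr1
        have h1 := hsep' x₁ ((sr:ℝ):Rmax) hfs
        rw [hv0, WithBot.bot_add, max_eq_left bot_le] at h1
        have h2 : u0 + ((sr:ℝ):Rmax) ≤ B x₁ := le_trans (le_max_right _ _) h1
        rw [← hu0r, ← WithBot.coe_add] at h2
        exact absurd h2 (not_le.2 hsr2)
    obtain ⟨a0, ha0⟩ := WithBot.ne_bot_iff_exists.1 (ne_bot_of_gt hBA0)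
    obtain ⟨kr, hkr⟩ := exists_gt_coe ((-a0 : ℝ):Rmax)   -- dummy; we need t < a0 + kr
    -- choose kr directly:
    obtain ⟨kr', hkr'⟩ := exists_gt_coe t
    have hkey : ∃ kr : ℝ, t < ((kr + a0 : ℝ):Rmax) := by
      obtain ⟨rr, hrr⟩ := exists_gt_coe t
      exact ⟨rr - a0, by rw [sub_add_cancel]; exact hrr⟩
    obtain ⟨kkr, hkkr⟩ := hkey
    refine ⟨fun i => ((kkr:ℝ):Rmax) + u1 i, ((kkr:ℝ):Rmax) + c,
      fun i => ((kkr:ℝ):Rmax) + v1 i, ((kkr:ℝ):Rmax) + d, ?_, ?_⟩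
    · intro x
      rw [trm_shift]
      by_cases hx : aff v1 d x < aff u1 c x
      · rw [hAB x hx]
        exact le_top
      · unfold trm
        rw [rdiff_of_le (not_lt.1 hx), WithBot.add_bot]
        exact bot_le
    · rw [trm_shift]
      unfold trm
      have hBA0' : aff v1 d x₀ < aff u1 c x₀ := hBA0
      have ha0' : ((a0:ℝ):Rmax) = aff u1 c x₀ := ha0
      rw [rdiff_of_lt hBA0', ← ha0', ← WithBot.coe_add]
      exact hkkr
  · -- v0 = coe
    obtain ⟨v0r, hv0r⟩ := WithBot.ne_bot_iff_exists.1 hv0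
    have hcancel : ∀ s : Rmax, (((-v0r : ℝ)):Rmax) + (v0 + s) = s := by
      intro s
      rw [← hv0r, ← add_assoc, ← WithBot.coe_add]
      norm_num
    by_cases hgood : max (B x₀) (v0 + t) < A x₀
    · refine ⟨fun i => (((-v0r : ℝ)):Rmax) + u1 i, (((-v0r : ℝ)):Rmax) + c,
        fun i => (((-v0r : ℝ)):Rmax) + v1 i, (((-v0r : ℝ)):Rmax) + d, ?_, ?_⟩
      · intro x
        rw [trm_shift]
        by_cases hx : aff v1 d x < aff u1 c x
        · unfold trm
          rw [rdiff_of_lt hx]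
          by_cases hxt : f x = ⊤
          · rw [hxt]; exact le_top
          obtain ⟨s, hs⟩ := exists_toE_eq (lt_top_iff_ne_top.2 hxt)
          have h1 := hsep' x s (le_of_eq hs.symm)
          have h2 : A x ≤ max (B x) (v0 + s) := le_trans (le_max_left _ _) h1
          have h3 : A x ≤ v0 + s := by
            rcases le_max_iff.1 h2 with h | h
            · exact absurd hx (not_lt.2 h)
            · exact h
          have h5 : (((-v0r : ℝ)):Rmax) + A x ≤ s :=
            hcancel s ▸ add_le_add_right h3 (((-v0r : ℝ)):Rmax)
          exact le_trans (toE_mono h5) (le_of_eq hs)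
        · unfold trm
          rw [rdiff_of_le (not_lt.1 hx), WithBot.add_bot]
          exact bot_le
      · rw [trm_shift]
        have hBA0 : aff v1 d x₀ < aff u1 c x₀ := lt_of_le_of_lt (le_max_left _ _) hgood
        unfold trm
        rw [rdiff_of_lt hBA0]
        have h1 : v0 + t < A x₀ := lt_of_le_of_lt (le_max_right _ _) hgood
        have h2 := add_lt_add_left_iff (r := -v0r) (a := v0 + t) (b := A x₀) |>.2 h1
        rwa [hcancel t] at h2
    · exfalso
      push_neg at hgood
      have h1 : max (B x₀) (v0 + t) < u0 + t := by
        rcases max_cases (A x₀) (u0 + t) with ⟨hh, _⟩ | ⟨hh, _⟩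
        · rw [hh] at hstrict'
          exact absurd (lt_of_lt_of_le hstrict' hgood) (lt_irrefl _)
        · rw [hh] at hstrict'
          exact hstrict'
      have h2 : v0 + t < u0 + t := lt_of_le_of_lt (le_max_right _ _) h1
      have ht_ne : t ≠ ⊥ := by
        intro h
        rw [h, WithBot.add_bot, WithBot.add_bot] at h2
        exact not_lt_bot h2
      obtain ⟨tr, htr⟩ := WithBot.ne_bot_iff_exists.1 ht_ne
      have hu0 : u0 ≠ ⊥ := by
        intro h
        rw [h, WithBot.bot_add] at h2
        exact not_lt_bot h2
      obtain ⟨u0r, hu0r⟩ := WithBot.ne_bot_iff_exists.1 hu0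
      have hu0v0 : v0r < u0r := by
        rw [← hu0r, ← hv0r, ← htr, ← WithBot.coe_add, ← WithBot.coe_add,
          WithBot.coe_lt_coe] at h2
        linarith
      obtain ⟨sr, hsr1, hsr2⟩ := exists_big_s s₁ (B x₁) u0r
      have hfs : f x₁ ≤ Rmax.toE ((sr:ℝ):Rmax) := hs₁ ▸ toE_mono hsr1
      have h3 := hsep' x₁ ((sr:ℝ):Rmax) hfs
      have h4 : u0 + ((sr:ℝ):Rmax) ≤ max (B x₁) (v0 + ((sr:ℝ):Rmax)) :=
        le_trans (le_max_right _ _) h3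
      rcases le_max_iff.1 h4 with h5 | h5
      · rw [← hu0r, ← WithBot.coe_add] at h5
        exact absurd h5 (not_le.2 hsr2)
      · rw [← hu0r, ← hv0r, ← WithBot.coe_add, ← WithBot.coe_add,
          WithBot.coe_le_coe] at h5
        linarith

end MP

/-- **A function `f : ℝmax^n → ℝ̄` is max-plus convex and lower semi-continuous
iff it is a pointwise sup of residuated differences of max-plus affine
functions.** -/
theorem stmt1 {n : ℕ} (f : (Fin n → Rmax) → EReal) :
    (MPConvexFun f ∧ LSC f) ↔
    ∃ (L : Type) (w' w'' : L → Fin n → Rmax) (d' d'' : L → Rmax),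
      ∀ x, f x = ⨆ l, Rmax.toE
        (rdiff (max (mdot (w' l) x) (d' l)) (max (mdot (w'' l) x) (d'' l))) := by
  constructor
  · rintro ⟨hconv, hlsc⟩
    refine ⟨{q : ((Fin n → Rmax) × Rmax) × (Fin n → Rmax) × Rmax //
        ∀ x, Rmax.toE (MP.trm q.1.1 q.1.2 q.2.1 q.2.2 x) ≤ f x},
      fun l => l.1.1.1, fun l => l.1.2.1, fun l => l.1.1.2, fun l => l.1.2.2, ?_⟩
    intro x
    apply le_antisymm
    · apply le_of_forall_lt
      intro cc hcc
      have hex : ∃ t : Rmax, cc ≤ Rmax.toE t ∧ Rmax.toE t < f x := by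
        obtain ⟨qq, h1, h2⟩ := EReal.exists_rat_btwn_of_lt hcc
        exact ⟨(((qq:ℝ)):Rmax), le_of_lt (by rw [MP.toE_coe]; exact_mod_cast h1),
          by rw [MP.toE_coe]; exact_mod_cast h2⟩
      obtain ⟨t, hct, htf⟩ := hex
      obtain ⟨w', d', w'', d'', hle, hgt⟩ := MP.exists_term hconv hlsc htf
      calc cc ≤ Rmax.toE t := hct
        _ < Rmax.toE (MP.trm w' d' w'' d'' x) := MP.toE_lt_toE_iff.2 hgt
        _ ≤ _ := le_iSup (fun l : {q : ((Fin n → Rmax) × Rmax) × (Fin n → Rmax) × Rmax //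
              ∀ x, Rmax.toE (MP.trm q.1.1 q.1.2 q.2.1 q.2.2 x) ≤ f x} =>
            Rmax.toE (rdiff (max (mdot l.1.1.1 x) l.1.1.2) (max (mdot l.1.2.1 x) l.1.2.2)))
            ⟨((w', d'), (w'', d'')), hle⟩
    · exact iSup_le fun l => l.2 x
  · rintro ⟨L, w', w'', d', d'', hf⟩
    constructor
    · intro p hp q hq α β hαβ
      have hp' : ∀ l, MP.trm (w' l) (d' l) (w'' l) (d'' l) p.1 ≤ p.2 := by
        intro l
        have h1 : Rmax.toE (MP.trm (w' l) (d' l) (w'' l) (d'' l) p.1) ≤ f p.1 := by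
          rw [hf p.1]
          exact le_iSup (fun l => Rmax.toE
            (rdiff (max (mdot (w' l) p.1) (d' l)) (max (mdot (w'' l) p.1) (d'' l)))) l
        exact MP.toE_le_toE_iff.1 (le_trans h1 hp)
      have hq' : ∀ l, MP.trm (w' l) (d' l) (w'' l) (d'' l) q.1 ≤ q.2 := by
        intro l
        have h1 : Rmax.toE (MP.trm (w' l) (d' l) (w'' l) (d'' l) q.1) ≤ f q.1 := by
          rw [hf q.1]
          exact le_iSup (fun l => Rmax.toE
            (rdiff (max (mdot (w' l) q.1) (d' l)) (max (mdot (w'' l) q.1) (d'' l)))) l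
        exact MP.toE_le_toE_iff.1 (le_trans h1 hq)
      show f (fun i => max (α + p.1 i) (β + q.1 i)) ≤ Rmax.toE (max (α + p.2) (β + q.2))
      rw [hf]
      apply iSup_le
      intro l
      exact MP.toE_mono (MP.trm_combo (w' l) (d' l) (w'' l) (d'' l) hαβ (hp' l) (hq' l))
    · intro tt
      have he : {x | f x ≤ tt} = ⋂ l, {x | Rmax.toE
          (MP.trm (w' l) (d' l) (w'' l) (d'' l) x) ≤ tt} := by
        ext x
        simp only [Set.mem_setOf_eq, Set.mem_iInter, hf x, iSup_le_iff]
        exact Iff.rfl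
      rw [he]
      exact isClosed_iInter fun l => MP.isClosed_trm_level (w' l) (d' l) (w'' l) (d'' l) tt

end
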